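/- Under the hypotheses of the linear-convergence theorem for randomized sparse Kaczmarz with averaging (consistent system with x̂ the unique solution of min λ‖x‖₁ + ½‖x‖₂² s.t. Ax = b; coupling P W D^{-2} = (α/‖A‖_F²) I; η > 1; 0 < α < 2 (η − ½ σ_max(W)) ‖A‖_F² / (σ_max(A)²(η − 1)); iterates x_k produced by Algorithm RSKA starting from x₀ = x₀* = 0), the iterates satisfy for all k: E[ ‖x_k − x̂‖₂² ] ≤ 2 q^k f(x̂), where q = 1 − L(α)/(γ‖A‖_F²), L(α) = α − (α/(2η))((α/‖A‖_F²)(η−1)σ_max(A)² + σ_max(W)), γ = (|x̂|_min + 2λ)/(|x̂|_min σ̃_min(A)²), and f(x) = λ‖x‖₁ + ½‖x‖₂². -/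

import Mathlib

open Matrix Finset

noncomputable section

/-- Euclidean dot product of two vectors. -/
def dot {n : ℕ} (x y : Fin n → ℝ) : ℝ := ∑ j, x j * y j

/-- Squared Euclidean norm of a vector. -/
def norm2Sq {n : ℕ} (x : Fin n → ℝ) : ℝ := ∑ j, x j ^ 2

/-- ℓ¹ norm of a vector. -/
def l1Norm {n : ℕ} (x : Fin n → ℝ) : ℝ := ∑ j, |x j|

/-- Squared Euclidean norm of the i-th row of a matrix. -/
def rowNormSq {m n : ℕ} (A : Matrix (Fin m) (Fin n) ℝ) (i : Fin m) : ℝ := ∑ j, A i j ^ 2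

/-- Squared Frobenius norm of a matrix. -/
def frobSq {m n : ℕ} (A : Matrix (Fin m) (Fin n) ℝ) : ℝ := ∑ i, ∑ j, A i j ^ 2

/-- Largest singular value (spectral norm) of a matrix:  sup over `x ≠ 0` of `‖Ax‖₂/‖x‖₂`. -/
def sigmaMax {m n : ℕ} (A : Matrix (Fin m) (Fin n) ℝ) : ℝ :=
  sSup {t : ℝ | ∃ x : Fin n → ℝ, x ≠ 0 ∧
    t = Real.sqrt (norm2Sq (A.mulVec x)) / Real.sqrt (norm2Sq x)}

/-- `σ̃_min(A)`: the minimum over nonzero column-submatrices `A_J` of the smallest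
singular value `σ_min(A_J) = min_{x ≠ 0, supp x ⊆ J} ‖Ax‖₂/‖x‖₂`. -/
def sigmaTildeMin {m n : ℕ} (A : Matrix (Fin m) (Fin n) ℝ) : ℝ :=
  sInf {t : ℝ | ∃ J : Finset (Fin n), (∃ i j, j ∈ J ∧ A i j ≠ 0) ∧
    ∃ x : Fin n → ℝ, x ≠ 0 ∧ (∀ j ∉ J, x j = 0) ∧
      t = Real.sqrt (norm2Sq (A.mulVec x)) / Real.sqrt (norm2Sq x)}

/-- `|x|_min`: the smallest absolute value of the nonzero entries of `x`. -/
def minAbs {n : ℕ} (x : Fin n → ℝ) : ℝ := sInf {t : ℝ | ∃ j, x j ≠ 0 ∧ t = |x j|}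

/-- Componentwise soft shrinkage operator `S_λ(x) = max{|x| - λ, 0}·sign(x)`. -/
def softShrink {n : ℕ} (lam : ℝ) (x : Fin n → ℝ) : Fin n → ℝ :=
  fun j => Real.sign (x j) * max (|x j| - lam) 0

/-- The objective `f(x) = λ‖x‖₁ + ½‖x‖₂²`. -/
def fObj {n : ℕ} (lam : ℝ) (x : Fin n → ℝ) : ℝ := lam * l1Norm x + norm2Sq x / 2

/-- `g` is a subgradient of `f` at `x`. -/
def IsSubgrad {n : ℕ} (f : (Fin n → ℝ) → ℝ) (x g : Fin n → ℝ) : Prop :=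
  ∀ y, f x + dot g (y - x) ≤ f y

/-- Bregman distance `D_f^{x*}(x, y) = f(y) - f(x) - ⟨x*, y - x⟩`. -/
def breg {n : ℕ} (f : (Fin n → ℝ) → ℝ) (xstar x y : Fin n → ℝ) : ℝ :=
  f y - f x - dot xstar (y - x)

/-- One step of the randomized sparse Kaczmarz method with averaging (RSKA) on the dual
variable: `x* ← x* − (1/η) Σ_{i∈τ} w_i (⟨a_i, S_λ(x*)⟩ − b_i)/‖a_i‖₂² · a_i`. -/
def rskaStep {m n : ℕ} (A : Matrix (Fin m) (Fin n) ℝ) (b : Fin m → ℝ) (lam : ℝ)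
    (w : Fin m → ℝ) (η : ℕ) (xstar : Fin n → ℝ) (τ : Fin η → Fin m) : Fin n → ℝ :=
  xstar - (η : ℝ)⁻¹ •
    ∑ t, ((w (τ t) * (dot (A (τ t)) (softShrink lam xstar) - b (τ t))) / rowNormSq A (τ t))
      • A (τ t)

/-- The RSKA dual iterates `x_k*` as a function of the history `σ` of sampled index tuples,
starting from `x₀* = 0`.  The primal iterate is `x_k = S_λ(x_k*)`. -/
def rskaSeq {m n : ℕ} (A : Matrix (Fin m) (Fin n) ℝ) (b : Fin m → ℝ) (lam : ℝ)
    (w : Fin m → ℝ) (η : ℕ) : (k : ℕ) → (Fin k → Fin η → Fin m) → (Fin n → ℝ)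
  | 0, _ => 0
  | k + 1, σ =>
      rskaStep A b lam w η (rskaSeq A b lam w η k (fun i => σ i.castSucc)) (σ (Fin.last k))

/-- Probability of a history `σ` of `k` i.i.d. tuples of `η` i.i.d. indices with
probabilities `p`. -/
def histProb {m η : ℕ} (p : Fin m → ℝ) (k : ℕ) (σ : Fin k → Fin η → Fin m) : ℝ :=
  ∏ i, ∏ t, p (σ i t)

namespace RSKA

variable {m n η : ℕ} {lam : ℝ}

def sshr (lam u : ℝ) : ℝ := Real.sign u * max (|u| - lam) 0


lemma sshr_eq (hlam : 0 < lam) (u : ℝ) :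
    sshr lam u = if lam < u then u - lam else if u < -lam then u + lam else 0 := by
  unfold sshr
  split_ifs with h1 h2
  · rw [Real.sign_of_pos (by linarith), abs_of_pos (by linarith), max_eq_left (by linarith)]; ring
  · rw [Real.sign_of_neg (by linarith), abs_of_neg (by linarith), max_eq_left (by linarith)]; ring
  · have : |u| ≤ lam := abs_le.mpr ⟨by linarith, by linarith⟩
    rw [max_eq_right (by linarith)]; ring

lemma abs_sub_sshr_le (hlam : 0 < lam) (u : ℝ) : |u - sshr lam u| ≤ lam := by
  rw [sshr_eq hlam]
  split_ifs with h1 h2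
  · have : u - (u - lam) = lam := by ring
    rw [this, abs_of_pos hlam]
  · rw [abs_le]; constructor <;> linarith
  · rw [sub_zero, abs_le]; constructor <;> linarith

lemma sshr_mul (hlam : 0 < lam) (u : ℝ) :
    (u - sshr lam u) * sshr lam u = lam * |sshr lam u| := by
  rw [sshr_eq hlam]
  split_ifs with h1 h2
  · rw [abs_of_nonneg (by linarith)]; ring
  · rw [abs_of_nonpos (by linarith)]; ring
  · simp

lemma abs_sshr_le (hlam : 0 < lam) (u v : ℝ) :
    |sshr lam v| ≤ |v - (u - sshr lam u)| := by
  have hc := abs_sub_sshr_le hlam u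
  have h1 : |sshr lam v| = max (|v| - lam) 0 := by
    rw [sshr_eq hlam]
    split_ifs with h1 h2
    · rw [abs_of_nonneg (by linarith), abs_of_pos (by linarith), max_eq_left (by linarith)]
    · rw [abs_of_nonpos (by linarith), abs_of_neg (by linarith), max_eq_left (by linarith)]; ring
    · have : |v| ≤ lam := abs_le.mpr ⟨by linarith, by linarith⟩
      rw [abs_zero, max_eq_right (by linarith)]
  rw [h1]
  apply max_le
  · calc |v| - lam ≤ |v| - |u - sshr lam u| := by linarith
    _ ≤ |v - (u - sshr lam u)| := by
        have := abs_sub_abs_le_abs_sub v (u - sshr lam u); linarith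
  · exact abs_nonneg _

lemma sshr_descent (hlam : 0 < lam) (u v : ℝ) :
    (sshr lam v)^2/2 - (sshr lam u)^2/2 - sshr lam u * (v - u) ≤ (v - u)^2/2 := by
  have h := abs_sshr_le hlam u v
  have h2 : (sshr lam v)^2 ≤ (v - (u - sshr lam u))^2 := by
    rw [← sq_abs (sshr lam v), ← sq_abs (v - (u - sshr lam u))]
    exact pow_le_pow_left₀ (abs_nonneg _) h 2
  nlinarith [h2]

lemma sshr_strong (hlam : 0 < lam) (u y : ℝ) :
    lam*|y| + y^2/2 - lam*|sshr lam u| - (sshr lam u)^2/2 - u*(y - sshr lam u)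
      ≥ (y - sshr lam u)^2/2 := by
  have h1 := sshr_mul hlam u
  have h2 := abs_sub_sshr_le hlam u
  have h3 : (u - sshr lam u) * y ≤ lam * |y| := by
    calc (u - sshr lam u) * y ≤ |(u - sshr lam u) * y| := le_abs_self _
    _ = |u - sshr lam u| * |y| := abs_mul _ _
    _ ≤ lam * |y| := mul_le_mul_of_nonneg_right h2 (abs_nonneg _)
  nlinarith [h1, h3]

/-- key scalar upper bound: `λ|y| - c y ≤ (2λ/m̂)(s-y)²` packaged into φ-form. -/
lemma sshr_upper (hlam : 0 < lam) (u y mh : ℝ) (hmh : 0 < mh) (hy : y = 0 ∨ mh ≤ |y|) :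
    lam*|y| + y^2/2 - lam*|sshr lam u| - (sshr lam u)^2/2 - u*(y - sshr lam u)
      ≤ (1/2 + 2*lam/mh) * (sshr lam u - y)^2 := by
  set s := sshr lam u with hs
  have h1 := sshr_mul hlam u
  have h2 := abs_sub_sshr_le hlam u
  -- main claim: lam*|y| - (u - s)*y ≤ (2*lam/mh) * (s - y)^2
  have key : lam*|y| - (u - s)*y ≤ (2*lam/mh) * (s - y)^2 := by
    rcases hy with h0 | hge
    · simp [h0]
      positivity
    · have hyne : y ≠ 0 := by intro h; rw [h, abs_zero] at hge; linarith
      by_cases hcy : (u - s) * y = lam * |y|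
      · have : (0:ℝ) ≤ (2*lam/mh) * (s - y)^2 := by positivity
        linarith
      · -- then (s-y)^2 ≥ y^2
        have hsy : y^2 ≤ (s - y)^2 := by
          by_cases hs0 : s = 0
          · rw [hs0]; ring_nf; nlinarith
          · -- s ≠ 0 : c = lam * |s| / s, signs must differ
            have hc : (u - s) = lam * |s| / s := by
              field_simp
              linarith [h1]
            rcases lt_trichotomy s 0 with hneg | hzero | hpos
            · have : |s| = -s := abs_of_neg hneg
              rw [hc, this] at hcy
              have hcv : lam * -s / s = -lam := by field_simp
              rw [hcv] at hcy
              -- hcy : -lam * y ≠ lam * |y| so y > 0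
              have hypos : 0 < y := by
                rcases lt_trichotomy y 0 with h | h | h
                · exfalso; apply hcy; rw [abs_of_neg h]; ring
                · exact absurd h hyne
                · exact h
              nlinarith
            · exact absurd hzero hs0
            · have : |s| = s := abs_of_pos hpos
              rw [hc, this] at hcy
              have hcv : lam * s / s = lam := by field_simp
              rw [hcv] at hcy
              have hyneg : y < 0 := by
                rcases lt_trichotomy y 0 with h | h | h
                · exact h
                · exact absurd h hyne
                · exfalso; apply hcy; rw [abs_of_pos h]
              nlinarith
        have h3 : (u - s) * y ≥ -(lam * |y|) := by
          have : |(u-s)*y| ≤ lam * |y| := by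
            rw [abs_mul]; exact mul_le_mul_of_nonneg_right h2 (abs_nonneg _)
          have := neg_abs_le ((u-s)*y)
          linarith [abs_le.mp ‹|(u-s)*y| ≤ lam * |y|›]
        -- lam|y| - cy ≤ 2 lam |y| ≤ (2lam/mh) y^2 ≤ (2lam/mh)(s-y)^2
        have h4 : lam*|y| - (u - s)*y ≤ 2 * lam * |y| := by linarith
        have h5 : 2 * lam * |y| ≤ (2*lam/mh) * y^2 := by
          rw [div_mul_eq_mul_div, le_div_iff₀ hmh]
          have hyy : y^2 = |y| * |y| := by rw [← sq_abs]; ring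
          nlinarith [mul_nonneg (mul_nonneg (le_of_lt hlam) (abs_nonneg y)) (sub_nonneg.mpr hge)]
        have h6 : (2*lam/mh) * y^2 ≤ (2*lam/mh) * (s - y)^2 := by
          apply mul_le_mul_of_nonneg_left hsy; positivity
        linarith
  nlinarith [key, h1]

/-- scalar φ-descent: φ(u+δ) ≤ φ(u) + (s(u) - y) δ + δ²/2 -/
lemma sshr_phi_descent (hlam : 0 < lam) (u d y : ℝ) :
    lam*|y| + y^2/2 - lam*|sshr lam (u+d)| - (sshr lam (u+d))^2/2 - (u+d)*(y - sshr lam (u+d))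
      ≤ (lam*|y| + y^2/2 - lam*|sshr lam u| - (sshr lam u)^2/2 - u*(y - sshr lam u))
        + (sshr lam u - y) * d + d^2/2 := by
  have m1 := sshr_mul hlam u
  have m2 := sshr_mul hlam (u+d)
  have hd := sshr_descent hlam u (u+d)
  nlinarith [m1, m2, hd]

def Dfun {n : ℕ} (lam : ℝ) (xhat u : Fin n → ℝ) : ℝ :=
  fObj lam xhat - fObj lam (softShrink lam u) - dot u (xhat - softShrink lam u)

lemma softShrink_apply (u : Fin n → ℝ) (j : Fin n) : softShrink lam u j = sshr lam (u j) := rfl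

lemma fObj_eq_sum (v : Fin n → ℝ) : fObj lam v = ∑ j, (lam * |v j| + (v j)^2/2) := by
  rw [fObj, l1Norm, norm2Sq, Finset.mul_sum, Finset.sum_div, ← Finset.sum_add_distrib]

lemma Dfun_eq_sum (xhat u : Fin n → ℝ) :
    Dfun lam xhat u = ∑ j, (lam*|xhat j| + (xhat j)^2/2 - lam*|sshr lam (u j)|
      - (sshr lam (u j))^2/2 - u j * (xhat j - sshr lam (u j))) := by
  rw [Dfun, fObj_eq_sum, fObj_eq_sum, dot, ← Finset.sum_sub_distrib, ← Finset.sum_sub_distrib]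
  apply Finset.sum_congr rfl
  intro j _
  simp only [softShrink_apply, Pi.sub_apply]
  ring

lemma Dfun_descent (hlam : 0 < lam) (xhat u d : Fin n → ℝ) :
    Dfun lam xhat (u + d) ≤ Dfun lam xhat u + dot (softShrink lam u - xhat) d + norm2Sq d / 2 := by
  rw [Dfun_eq_sum, Dfun_eq_sum, dot, norm2Sq, Finset.sum_div, ← Finset.sum_add_distrib,
    ← Finset.sum_add_distrib]
  apply Finset.sum_le_sum
  intro j _
  have := sshr_phi_descent hlam (u j) (d j) (xhat j)
  simp only [Pi.add_apply, Pi.sub_apply, softShrink_apply]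
  calc lam*|xhat j| + (xhat j)^2/2 - lam*|sshr lam (u j + d j)| - (sshr lam (u j + d j))^2/2
        - (u j + d j) * (xhat j - sshr lam (u j + d j))
      ≤ (lam*|xhat j| + (xhat j)^2/2 - lam*|sshr lam (u j)| - (sshr lam (u j))^2/2
        - u j*(xhat j - sshr lam (u j))) + (sshr lam (u j) - xhat j) * (d j) + (d j)^2/2 := this
    _ = _ := by ring

lemma Dfun_strong (hlam : 0 < lam) (xhat u : Fin n → ℝ) :
    norm2Sq (softShrink lam u - xhat) / 2 ≤ Dfun lam xhat u := by
  rw [Dfun_eq_sum, norm2Sq, Finset.sum_div]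
  apply Finset.sum_le_sum
  intro j _
  have := sshr_strong hlam (u j) (xhat j)
  simp only [Pi.sub_apply, softShrink_apply]
  have heq : (sshr lam (u j) - xhat j)^2 = (xhat j - sshr lam (u j))^2 := by ring
  linarith [this, heq.ge]

lemma Dfun_nonneg (hlam : 0 < lam) (xhat u : Fin n → ℝ) : 0 ≤ Dfun lam xhat u := by
  have h := Dfun_strong hlam xhat u
  have : 0 ≤ norm2Sq (softShrink lam u - xhat) := Finset.sum_nonneg fun j _ => sq_nonneg _
  linarith

lemma Dfun_upper (hlam : 0 < lam) (xhat u : Fin n → ℝ) (mh : ℝ) (hmh : 0 < mh)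
    (hm : ∀ j, xhat j = 0 ∨ mh ≤ |xhat j|) :
    Dfun lam xhat u ≤ (1/2 + 2*lam/mh) * norm2Sq (softShrink lam u - xhat) := by
  rw [Dfun_eq_sum, norm2Sq, Finset.mul_sum]
  apply Finset.sum_le_sum
  intro j _
  simp only [Pi.sub_apply, softShrink_apply]
  exact sshr_upper hlam (u j) (xhat j) mh hmh (hm j)

lemma Dfun_zero (hlam : 0 < lam) (xhat : Fin n → ℝ) : Dfun lam xhat (0 : Fin n → ℝ) = fObj lam xhat := by
  have hS : softShrink lam (0 : Fin n → ℝ) = 0 := by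
    funext j; simp [softShrink]
  rw [Dfun, hS]
  have h0 : fObj lam (0 : Fin n → ℝ) = 0 := by simp [fObj, l1Norm, norm2Sq]
  have hd : dot (0 : Fin n → ℝ) (xhat - 0) = 0 := by simp [dot]
  rw [h0, hd]; ring

lemma sum_fun_prod (q : Fin η → Fin m → ℝ) :
    ∑ g : Fin η → Fin m, ∏ t, q t (g t) = ∏ t, ∑ i, q t i := by
  rw [Finset.prod_univ_sum (fun _ => (Finset.univ : Finset (Fin m))) q]
  rw [Fintype.piFinset_univ]

lemma prod_one_ite (t₀ : Fin η) (F : Fin η → ℝ) :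
    (∏ t, (if t = t₀ then F t else 1)) = F t₀ := by
  rw [Finset.prod_ite_eq' Finset.univ t₀ F, if_pos (Finset.mem_univ _)]

lemma prod_two_ite (t₀ t₁ : Fin η) (hne : t₀ ≠ t₁) (F G : Fin η → ℝ) :
    (∏ t, (if t = t₀ then F t else if t = t₁ then G t else 1)) = F t₀ * G t₁ := by
  rw [← Finset.mul_prod_erase Finset.univ _ (Finset.mem_univ t₀), if_pos rfl]
  have ht₁ : t₁ ∈ Finset.univ.erase t₀ := Finset.mem_erase.mpr ⟨hne.symm, Finset.mem_univ _⟩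
  rw [← Finset.mul_prod_erase _ _ ht₁, if_neg hne.symm, if_pos rfl]
  rw [Finset.prod_eq_one, mul_one]
  intro t ht
  have h1 := (Finset.mem_erase.mp ht).1
  have h2 := (Finset.mem_erase.mp (Finset.mem_erase.mp ht).2).1
  rw [if_neg h2, if_neg h1]

lemma exp_single (p : Fin m → ℝ) (hp1 : ∑ i, p i = 1) (t₀ : Fin η) (F : Fin m → ℝ) :
    ∑ τ : Fin η → Fin m, (∏ t, p (τ t)) * F (τ t₀) = ∑ i, p i * F i := by
  have h1 : ∑ τ : Fin η → Fin m, (∏ t, p (τ t)) * F (τ t₀)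
      = ∑ τ : Fin η → Fin m, ∏ t, (p (τ t) * (if t = t₀ then F (τ t) else 1)) := by
    apply Finset.sum_congr rfl
    intro τ _
    rw [Finset.prod_mul_distrib, prod_one_ite t₀ (fun t => F (τ t))]
  have h2 : ∑ τ : Fin η → Fin m, ∏ t, (p (τ t) * (if t = t₀ then F (τ t) else 1))
      = ∏ t, ∑ i, p i * (if t = t₀ then F i else 1) :=
    Finset.prod_univ_sum (fun _ => (Finset.univ : Finset (Fin m)))
      (fun t i => p i * (if t = t₀ then F i else 1)) ▸ rfl
  have h3 : (∏ t, ∑ i, p i * (if t = t₀ then F i else 1))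
      = ∏ t, (if t = t₀ then ∑ i, p i * F i else 1) := by
    apply Finset.prod_congr rfl
    intro t _
    split_ifs with h
    · rfl
    · simp [hp1]
  rw [h1, h2, h3, prod_one_ite t₀ (fun _ => ∑ i, p i * F i)]

lemma exp_pair (p : Fin m → ℝ) (hp1 : ∑ i, p i = 1) (t₀ t₁ : Fin η) (hne : t₀ ≠ t₁)
    (F G : Fin m → ℝ) :
    ∑ τ : Fin η → Fin m, (∏ t, p (τ t)) * (F (τ t₀) * G (τ t₁))
      = (∑ i, p i * F i) * (∑ i, p i * G i) := by
  have h1 : ∑ τ : Fin η → Fin m, (∏ t, p (τ t)) * (F (τ t₀) * G (τ t₁))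
      = ∑ τ : Fin η → Fin m, ∏ t, (p (τ t) * (if t = t₀ then F (τ t) else if t = t₁ then G (τ t) else 1)) := by
    apply Finset.sum_congr rfl
    intro τ _
    rw [Finset.prod_mul_distrib, prod_two_ite t₀ t₁ hne (fun t => F (τ t)) (fun t => G (τ t))]
  have h2 : ∑ τ : Fin η → Fin m, ∏ t, (p (τ t) * (if t = t₀ then F (τ t) else if t = t₁ then G (τ t) else 1))
      = ∏ t, ∑ i, p i * (if t = t₀ then F i else if t = t₁ then G i else 1) :=
    Finset.prod_univ_sum (fun _ => (Finset.univ : Finset (Fin m)))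
      (fun t i => p i * (if t = t₀ then F i else if t = t₁ then G i else 1)) ▸ rfl
  have h3 : (∏ t, ∑ i, p i * (if t = t₀ then F i else if t = t₁ then G i else 1))
      = ∏ t, (if t = t₀ then ∑ i, p i * F i else if t = t₁ then ∑ i, p i * G i else 1) := by
    apply Finset.prod_congr rfl
    intro t _
    split_ifs with h h'
    · rfl
    · rfl
    · simp [hp1]
  rw [h1, h2, h3, prod_two_ite t₀ t₁ hne (fun _ => ∑ i, p i * F i) (fun _ => ∑ i, p i * G i)]

lemma exp_total (p : Fin m → ℝ) (hp1 : ∑ i, p i = 1) :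
    ∑ τ : Fin η → Fin m, (∏ t, p (τ t)) = 1 := by
  have := sum_fun_prod (fun (_ : Fin η) (i : Fin m) => p i)
  simp only [hp1] at this
  simpa using this

lemma norm2Sq_nonneg (x : Fin n → ℝ) : 0 ≤ norm2Sq x := Finset.sum_nonneg fun _ _ => sq_nonneg _

lemma norm2Sq_pos (x : Fin n → ℝ) (hx : x ≠ 0) : 0 < norm2Sq x := by
  obtain ⟨j, hj⟩ : ∃ j, x j ≠ 0 := by
    by_contra h
    push_neg at h
    exact hx (funext h)
  have h1 : x j ^ 2 ≤ norm2Sq x :=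
    Finset.single_le_sum (fun i _ => sq_nonneg (x i)) (Finset.mem_univ j)
  have h2 : 0 < x j ^ 2 := by positivity
  linarith

lemma cauchy_dot (x y : Fin n → ℝ) : (dot x y)^2 ≤ norm2Sq x * norm2Sq y := by
  simpa [dot, norm2Sq] using Finset.sum_mul_sq_le_sq_mul_sq Finset.univ x y

lemma frobSq_nonneg (A : Matrix (Fin m) (Fin n) ℝ) : 0 ≤ frobSq A :=
  Finset.sum_nonneg fun _ _ => Finset.sum_nonneg fun _ _ => sq_nonneg _

lemma frob_bound (A : Matrix (Fin m) (Fin n) ℝ) (x : Fin n → ℝ) :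
    norm2Sq (A.mulVec x) ≤ frobSq A * norm2Sq x := by
  rw [norm2Sq, frobSq, Finset.sum_mul]
  apply Finset.sum_le_sum
  intro i _
  have : A.mulVec x i = ∑ j, A i j * x j := by simp [Matrix.mulVec, dotProduct]
  rw [this]
  exact Finset.sum_mul_sq_le_sq_mul_sq Finset.univ (A i) x

lemma sigmaMax_bound (A : Matrix (Fin m) (Fin n) ℝ) (x : Fin n → ℝ) :
    norm2Sq (A.mulVec x) ≤ sigmaMax A ^ 2 * norm2Sq x := by
  by_cases hx : x = 0
  · subst hx
    have h1 : norm2Sq (A.mulVec (0 : Fin n → ℝ)) = 0 := by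
      rw [Matrix.mulVec_zero]
      simp [norm2Sq]
    rw [h1]
    exact mul_nonneg (sq_nonneg _) (norm2Sq_nonneg _)
  · have hZ : 0 < norm2Sq x := norm2Sq_pos x hx
    have hbdd : BddAbove {t : ℝ | ∃ y : Fin n → ℝ, y ≠ 0 ∧
        t = Real.sqrt (norm2Sq (A.mulVec y)) / Real.sqrt (norm2Sq y)} := by
      refine ⟨Real.sqrt (frobSq A), ?_⟩
      rintro t ⟨y, hy, rfl⟩
      have hZy : 0 < norm2Sq y := norm2Sq_pos y hy
      rw [div_le_iff₀ (Real.sqrt_pos.mpr hZy)]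
      rw [← Real.sqrt_mul (frobSq_nonneg A)]
      exact Real.sqrt_le_sqrt (frob_bound A y)
    have hmem : Real.sqrt (norm2Sq (A.mulVec x)) / Real.sqrt (norm2Sq x) ∈
        {t : ℝ | ∃ y : Fin n → ℝ, y ≠ 0 ∧
        t = Real.sqrt (norm2Sq (A.mulVec y)) / Real.sqrt (norm2Sq y)} := ⟨x, hx, rfl⟩
    have hle : Real.sqrt (norm2Sq (A.mulVec x)) / Real.sqrt (norm2Sq x) ≤ sigmaMax A :=
      le_csSup hbdd hmem
    set t := Real.sqrt (norm2Sq (A.mulVec x)) / Real.sqrt (norm2Sq x) with ht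
    have ht0 : 0 ≤ t := div_nonneg (Real.sqrt_nonneg _) (Real.sqrt_nonneg _)
    have hN : norm2Sq (A.mulVec x) = t^2 * norm2Sq x := by
      rw [ht, div_pow, Real.sq_sqrt (norm2Sq_nonneg _), Real.sq_sqrt (norm2Sq_nonneg _)]
      field_simp
    rw [hN]
    have : t^2 ≤ sigmaMax A ^2 := pow_le_pow_left₀ ht0 hle 2
    exact mul_le_mul_of_nonneg_right this (le_of_lt hZ)

lemma sigmaMax_nonneg (A : Matrix (Fin m) (Fin n) ℝ) (x : Fin n → ℝ) (hx : x ≠ 0) :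
    0 ≤ sigmaMax A := by
  have hbdd : BddAbove {t : ℝ | ∃ y : Fin n → ℝ, y ≠ 0 ∧
      t = Real.sqrt (norm2Sq (A.mulVec y)) / Real.sqrt (norm2Sq y)} := by
    refine ⟨Real.sqrt (frobSq A), ?_⟩
    rintro t ⟨y, hy, rfl⟩
    have hZy : 0 < norm2Sq y := norm2Sq_pos y hy
    rw [div_le_iff₀ (Real.sqrt_pos.mpr hZy)]
    rw [← Real.sqrt_mul (frobSq_nonneg A)]
    exact Real.sqrt_le_sqrt (frob_bound A y)
  have hmem : Real.sqrt (norm2Sq (A.mulVec x)) / Real.sqrt (norm2Sq x) ∈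
      {t : ℝ | ∃ y : Fin n → ℝ, y ≠ 0 ∧
      t = Real.sqrt (norm2Sq (A.mulVec y)) / Real.sqrt (norm2Sq y)} := ⟨x, hx, rfl⟩
  have hle := le_csSup hbdd hmem
  have h0 : (0:ℝ) ≤ Real.sqrt (norm2Sq (A.mulVec x)) / Real.sqrt (norm2Sq x) :=
    div_nonneg (Real.sqrt_nonneg _) (Real.sqrt_nonneg _)
  exact h0.trans hle

lemma adjoint_dot (A : Matrix (Fin m) (Fin n) ℝ) (r : Fin m → ℝ) (y : Fin n → ℝ) :
    dot (A.transpose.mulVec r) y = dot r (A.mulVec y) := by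
  simp only [dot, Matrix.mulVec, dotProduct, Matrix.transpose_apply]
  calc ∑ j, (∑ i, A i j * r i) * y j = ∑ j, ∑ i, A i j * r i * y j := by
        apply Finset.sum_congr rfl
        intro j _
        rw [Finset.sum_mul]
    _ = ∑ i, ∑ j, A i j * r i * y j := Finset.sum_comm
    _ = ∑ i, r i * ∑ j, A i j * y j := by
        apply Finset.sum_congr rfl
        intro i _
        rw [Finset.mul_sum]
        apply Finset.sum_congr rfl
        intro j _
        ring

lemma transpose_bound (A : Matrix (Fin m) (Fin n) ℝ) (r : Fin m → ℝ) :
    norm2Sq (A.transpose.mulVec r) ≤ sigmaMax A ^ 2 * norm2Sq r := by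
  set v := A.transpose.mulVec r with hv
  have hvd : norm2Sq v = dot r (A.mulVec v) := by
    rw [← adjoint_dot A r v]
    simp [dot, norm2Sq, sq]
    rfl
  by_cases h0 : norm2Sq v = 0
  · rw [h0]
    exact mul_nonneg (sq_nonneg _) (norm2Sq_nonneg r)
  · have hvpos : 0 < norm2Sq v := lt_of_le_of_ne (norm2Sq_nonneg v) (Ne.symm h0)
    have h1 : (norm2Sq v)^2 = (dot r (A.mulVec v))^2 := by rw [hvd]
    have h2 : (dot r (A.mulVec v))^2 ≤ norm2Sq r * norm2Sq (A.mulVec v) := cauchy_dot _ _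
    have h3 : norm2Sq (A.mulVec v) ≤ sigmaMax A ^2 * norm2Sq v := sigmaMax_bound A v
    have h4 : (norm2Sq v)^2 ≤ norm2Sq r * (sigmaMax A^2 * norm2Sq v) := by
      calc (norm2Sq v)^2 = (dot r (A.mulVec v))^2 := h1
        _ ≤ norm2Sq r * norm2Sq (A.mulVec v) := h2
        _ ≤ norm2Sq r * (sigmaMax A^2 * norm2Sq v) := by
            apply mul_le_mul_of_nonneg_left h3 (norm2Sq_nonneg r)
    nlinarith [hvpos]

lemma sigmaMax_diag_ge (w : Fin m → ℝ) (i : Fin m) : w i ≤ sigmaMax (Matrix.diagonal w) := by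
  have hbdd : BddAbove {t : ℝ | ∃ y : Fin m → ℝ, y ≠ 0 ∧
      t = Real.sqrt (norm2Sq ((Matrix.diagonal w).mulVec y)) / Real.sqrt (norm2Sq y)} := by
    refine ⟨Real.sqrt (frobSq (Matrix.diagonal w)), ?_⟩
    rintro t ⟨y, hy, rfl⟩
    have hZy : 0 < norm2Sq y := norm2Sq_pos y hy
    rw [div_le_iff₀ (Real.sqrt_pos.mpr hZy)]
    rw [← Real.sqrt_mul (frobSq_nonneg _)]
    exact Real.sqrt_le_sqrt (frob_bound _ y)
  set x : Fin m → ℝ := Pi.single i 1 with hx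
  have hxne : x ≠ 0 := by
    intro h
    have := congrFun h i
    simp [hx] at this
  have hDx : (Matrix.diagonal w).mulVec x = fun j => w j * x j := by
    funext j
    rw [Matrix.mulVec_diagonal]
  have hnx : norm2Sq x = 1 := by
    rw [norm2Sq, hx]
    rw [Finset.sum_eq_single i]
    · simp
    · intro j _ hj; simp [Pi.single_apply, hj]
    · intro h; exact absurd (Finset.mem_univ i) h
  have hnDx : norm2Sq ((Matrix.diagonal w).mulVec x) = (w i)^2 := by
    rw [hDx, norm2Sq]
    rw [Finset.sum_eq_single i]
    · simp [hx]
    · intro j _ hj; simp [hx, Pi.single_apply, hj]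
    · intro h; exact absurd (Finset.mem_univ i) h
  have hmemS : Real.sqrt (norm2Sq ((Matrix.diagonal w).mulVec x)) / Real.sqrt (norm2Sq x) ∈
      {t : ℝ | ∃ y : Fin m → ℝ, y ≠ 0 ∧
      t = Real.sqrt (norm2Sq ((Matrix.diagonal w).mulVec y)) / Real.sqrt (norm2Sq y)} :=
    ⟨x, hxne, rfl⟩
  have hmem := le_csSup hbdd hmemS
  rw [hnDx, hnx, Real.sqrt_one, div_one, Real.sqrt_sq_eq_abs] at hmem
  exact (le_abs_self (w i)).trans hmem

lemma sigmaTilde_bound (A : Matrix (Fin m) (Fin n) ℝ) (hA : ∃ i j, A i j ≠ 0)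
    (z : Fin n → ℝ) (hz : z ≠ 0) :
    sigmaTildeMin A ^ 2 * norm2Sq z ≤ norm2Sq (A.mulVec z) := by
  set S := {t : ℝ | ∃ J : Finset (Fin n), (∃ i j, j ∈ J ∧ A i j ≠ 0) ∧
    ∃ x : Fin n → ℝ, x ≠ 0 ∧ (∀ j ∉ J, x j = 0) ∧
      t = Real.sqrt (norm2Sq (A.mulVec x)) / Real.sqrt (norm2Sq x)} with hS
  have hbdd : BddBelow S := by
    refine ⟨0, ?_⟩
    rintro t ⟨J, hJ, x, hx, hsupp, rfl⟩
    exact div_nonneg (Real.sqrt_nonneg _) (Real.sqrt_nonneg _)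
  have hmem : Real.sqrt (norm2Sq (A.mulVec z)) / Real.sqrt (norm2Sq z) ∈ S := by
    obtain ⟨i, j, hij⟩ := hA
    exact ⟨Finset.univ, ⟨i, j, Finset.mem_univ j, hij⟩, z, hz,
      fun j hj => absurd (Finset.mem_univ j) hj, rfl⟩
  have hle : sigmaTildeMin A ≤ Real.sqrt (norm2Sq (A.mulVec z)) / Real.sqrt (norm2Sq z) :=
    csInf_le hbdd hmem
  have hnn : 0 ≤ sigmaTildeMin A := by
    apply Real.sInf_nonneg
    rintro t ⟨J, hJ, x, hx, hsupp, rfl⟩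
    exact div_nonneg (Real.sqrt_nonneg _) (Real.sqrt_nonneg _)
  have hZ : 0 < norm2Sq z := norm2Sq_pos z hz
  have h2 : sigmaTildeMin A ^2 ≤ norm2Sq (A.mulVec z) / norm2Sq z := by
    have := pow_le_pow_left₀ hnn hle 2
    rwa [div_pow, Real.sq_sqrt (norm2Sq_nonneg _), Real.sq_sqrt (norm2Sq_nonneg _)] at this
  calc sigmaTildeMin A^2 * norm2Sq z ≤ (norm2Sq (A.mulVec z) / norm2Sq z) * norm2Sq z :=
        mul_le_mul_of_nonneg_right h2 (le_of_lt hZ)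
    _ = norm2Sq (A.mulVec z) := by field_simp

lemma minAbs_spec (x : Fin n → ℝ) (hx : x ≠ 0) :
    0 < minAbs x ∧ ∀ j, x j = 0 ∨ minAbs x ≤ |x j| := by
  set S := {t : ℝ | ∃ j, x j ≠ 0 ∧ t = |x j|} with hS
  have hfin : S.Finite := by
    apply Set.Finite.subset (Set.finite_range (fun j => |x j|))
    rintro t ⟨j, _, rfl⟩
    exact ⟨j, rfl⟩
  have hne : S.Nonempty := by
    obtain ⟨j, hj⟩ : ∃ j, x j ≠ 0 := by
      by_contra h
      push_neg at h
      exact hx (funext h)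
    exact ⟨|x j|, j, hj, rfl⟩
  have hmem := Set.Nonempty.csInf_mem hne hfin
  obtain ⟨j0, hj0, hj0e⟩ := hmem
  constructor
  · rw [minAbs, hj0e]
    exact abs_pos.mpr hj0
  · intro j
    by_cases hj : x j = 0
    · exact Or.inl hj
    · exact Or.inr (csInf_le (Set.Finite.bddBelow hfin) ⟨j, hj, rfl⟩)

lemma sigmaTilde_nonneg (A : Matrix (Fin m) (Fin n) ℝ) : 0 ≤ sigmaTildeMin A := by
  apply Real.sInf_nonneg
  rintro t ⟨J, hJ, x, hx, hsupp, rfl⟩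
  exact div_nonneg (Real.sqrt_nonneg _) (Real.sqrt_nonneg _)

lemma dot_sum_right (y : Fin n → ℝ) {ι : Type*} (s : Finset ι) (v : ι → Fin n → ℝ) :
    dot y (∑ i ∈ s, v i) = ∑ i ∈ s, dot y (v i) := by
  unfold dot
  rw [Finset.sum_comm]
  apply Finset.sum_congr rfl
  intro j _
  rw [Finset.sum_apply, Finset.mul_sum]

lemma dot_smul_right (y : Fin n → ℝ) (c : ℝ) (v : Fin n → ℝ) :
    dot y (c • v) = c * dot y v := by
  unfold dot
  rw [Finset.mul_sum]
  apply Finset.sum_congr rfl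
  intro j _
  simp [Pi.smul_apply, smul_eq_mul]
  ring

lemma dot_neg_right (y v : Fin n → ℝ) : dot y (-v) = - dot y v := by
  unfold dot
  rw [← Finset.sum_neg_distrib]
  apply Finset.sum_congr rfl
  intro j _
  simp

lemma norm2Sq_neg (v : Fin n → ℝ) : norm2Sq (-v) = norm2Sq v := by
  unfold norm2Sq
  apply Finset.sum_congr rfl
  intro j _
  simp

lemma norm2Sq_smul (c : ℝ) (v : Fin n → ℝ) : norm2Sq (c • v) = c^2 * norm2Sq v := by
  unfold norm2Sq
  rw [Finset.mul_sum]
  apply Finset.sum_congr rfl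
  intro j _
  simp [Pi.smul_apply, smul_eq_mul]
  ring

/-- expectation of a sum of single-coordinate functions -/
lemma exp_dot_sum (p : Fin m → ℝ) (hp1 : ∑ i, p i = 1) (g : Fin m → ℝ) :
    ∑ τ : Fin η → Fin m, (∏ t, p (τ t)) * (∑ t, g (τ t)) = (η:ℝ) * ∑ i, p i * g i := by
  have h1 : ∀ τ : Fin η → Fin m, (∏ t, p (τ t)) * (∑ t, g (τ t))
      = ∑ t, (∏ t', p (τ t')) * g (τ t) := fun τ => Finset.mul_sum _ _ _
  rw [Finset.sum_congr rfl (fun τ _ => h1 τ), Finset.sum_comm]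
  rw [Finset.sum_congr rfl (fun t _ => exp_single p hp1 t g)]
  rw [Finset.sum_const, Finset.card_univ, Fintype.card_fin, nsmul_eq_mul]

/-- expectation of the squared norm of a sum of i.i.d. random vectors -/
lemma exp_norm2Sq_sum (p : Fin m → ℝ) (hp1 : ∑ i, p i = 1) (v : Fin m → Fin n → ℝ) :
    ∑ τ : Fin η → Fin m, (∏ t, p (τ t)) * norm2Sq (∑ t, v (τ t))
      = (η:ℝ) * (∑ i, p i * norm2Sq (v i)) + ((η:ℝ)^2 - (η:ℝ)) * norm2Sq (∑ i, p i • v i) := by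
  have hexp : ∀ j : Fin n, ∀ t t' : Fin η,
      ∑ τ : Fin η → Fin m, (∏ t'', p (τ t'')) * (v (τ t) j * v (τ t') j)
        = if t' = t then ∑ i, p i * (v i j)^2 else (∑ i, p i * v i j)^2 := by
    intro j t t'
    split_ifs with h
    · subst h
      have := exp_single p (η := η) hp1 t' (fun i => v i j * v i j)
      simpa [sq] using this
    · have := exp_pair p hp1 t t' (Ne.symm h) (fun i => v i j) (fun i => v i j)
      rw [this, sq]
  -- expand norm2Sq of sum into double sum over coordinates
  have h1 : ∀ τ : Fin η → Fin m, norm2Sq (∑ t, v (τ t))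
      = ∑ t, ∑ t', ∑ j, v (τ t) j * v (τ t') j := by
    intro τ
    unfold norm2Sq
    have : ∀ j, (∑ t, v (τ t)) j ^2 = ∑ t, ∑ t', v (τ t) j * v (τ t') j := by
      intro j
      rw [Finset.sum_apply, sq, Finset.sum_mul_sum]
    rw [Finset.sum_congr rfl fun j _ => this j, Finset.sum_comm]
    apply Finset.sum_congr rfl
    intro t _
    rw [Finset.sum_comm]
  have hdiagval : (∑ j, ∑ i, p i * (v i j)^2) = ∑ i, p i * norm2Sq (v i) := by
    rw [Finset.sum_comm]
    apply Finset.sum_congr rfl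
    intro i _
    rw [norm2Sq, Finset.mul_sum]
  have hcrossval : (∑ j, (∑ i, p i * v i j)^2) = norm2Sq (∑ i, p i • v i) := by
    simp [norm2Sq, Finset.sum_apply, Pi.smul_apply, smul_eq_mul]
  have hsplit : ∀ t : Fin η,
      (∑ t' : Fin η, ∑ j, (if t' = t then ∑ i, p i * (v i j)^2 else (∑ i, p i * v i j)^2))
        = (∑ j, ∑ i, p i * (v i j)^2) + ((η:ℝ) - 1) * (∑ j, (∑ i, p i * v i j)^2) := by
    intro t
    have hpull : ∀ t' : Fin η,
        (∑ j, (if t' = t then ∑ i, p i * (v i j)^2 else (∑ i, p i * v i j)^2))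
          = if t' = t then (∑ j, ∑ i, p i * (v i j)^2) else (∑ j, (∑ i, p i * v i j)^2) := by
      intro t'
      split_ifs <;> rfl
    rw [Finset.sum_congr rfl fun t' _ => hpull t']
    rw [← Finset.add_sum_erase _ _ (Finset.mem_univ t), if_pos rfl]
    congr 1
    rw [Finset.sum_congr rfl (fun t' ht' => if_neg (Finset.mem_erase.mp ht').1)]
    rw [Finset.sum_const, Finset.card_erase_of_mem (Finset.mem_univ t),
      Finset.card_univ, Fintype.card_fin, nsmul_eq_mul]
    congr 1
    rw [Nat.cast_sub t.pos, Nat.cast_one]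
  calc ∑ τ : Fin η → Fin m, (∏ t, p (τ t)) * norm2Sq (∑ t, v (τ t))
      = ∑ τ : Fin η → Fin m, ∑ t, ∑ t', (∏ t'', p (τ t'')) * (∑ j, v (τ t) j * v (τ t') j) := by
        apply Finset.sum_congr rfl
        intro τ _
        rw [h1 τ, Finset.mul_sum]
        apply Finset.sum_congr rfl
        intro t _
        rw [Finset.mul_sum]
    _ = ∑ t, ∑ t', ∑ τ : Fin η → Fin m, (∏ t'', p (τ t'')) * (∑ j, v (τ t) j * v (τ t') j) := by
        rw [Finset.sum_comm]
        apply Finset.sum_congr rfl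
        intro t _
        rw [Finset.sum_comm]
    _ = ∑ t, ∑ t', ∑ j, (if t' = t then ∑ i, p i * (v i j)^2 else (∑ i, p i * v i j)^2) := by
        apply Finset.sum_congr rfl
        intro t _
        apply Finset.sum_congr rfl
        intro t' _
        calc ∑ τ : Fin η → Fin m, (∏ t'', p (τ t'')) * (∑ j, v (τ t) j * v (τ t') j)
            = ∑ τ : Fin η → Fin m, ∑ j, (∏ t'', p (τ t'')) * (v (τ t) j * v (τ t') j) := by
              apply Finset.sum_congr rfl
              intro τ _
              rw [Finset.mul_sum]
          _ = ∑ j, ∑ τ : Fin η → Fin m, (∏ t'', p (τ t'')) * (v (τ t) j * v (τ t') j) :=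
              Finset.sum_comm
          _ = ∑ j, (if t' = t then ∑ i, p i * (v i j)^2 else (∑ i, p i * v i j)^2) :=
              Finset.sum_congr rfl fun j _ => hexp j t t'
    _ = ∑ t : Fin η, ((∑ j, ∑ i, p i * (v i j)^2) + ((η:ℝ)-1) * (∑ j, (∑ i, p i * v i j)^2)) :=
        Finset.sum_congr rfl fun t _ => hsplit t
    _ = (η:ℝ) * (∑ i, p i * norm2Sq (v i)) + ((η:ℝ)^2 - (η:ℝ)) * norm2Sq (∑ i, p i • v i) := by
        rw [Finset.sum_const, Finset.card_univ, Fintype.card_fin, nsmul_eq_mul,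
          hdiagval, hcrossval]
        ring

theorem step_exp {m n η : ℕ} (hη : 1 < η)
    (A : Matrix (Fin m) (Fin n) ℝ) (hA : ∀ i, A i ≠ 0)
    (b : Fin m → ℝ) {lam : ℝ} (hlam : 0 < lam)
    (w p : Fin m → ℝ) (hp0 : ∀ i, 0 ≤ p i) (hp1 : ∑ i, p i = 1)
    (α : ℝ) (hα : 0 < α)
    (hcoup : ∀ i, p i * w i / rowNormSq A i = α / frobSq A)
    (hF : 0 < frobSq A)
    (xhat : Fin n → ℝ) (hxhat : A.mulVec xhat = b) (u : Fin n → ℝ) :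
    ∑ τ : Fin η → Fin m, (∏ t, p (τ t)) * Dfun lam xhat (rskaStep A b lam w η u τ)
      ≤ Dfun lam xhat u
        - ((α - α / (2 * (η:ℝ)) * (α / frobSq A * ((η:ℝ) - 1) * sigmaMax A ^ 2
            + sigmaMax (Matrix.diagonal w))) / frobSq A)
          * norm2Sq (fun i => dot (A i) (softShrink lam u) - b i) := by
  set x := softShrink lam u with hx
  set r : Fin m → ℝ := fun i => dot (A i) x - b i with hr
  set c : Fin m → ℝ := fun i => (w i * (dot (A i) x - b i)) / rowNormSq A i with hc
  set σW := sigmaMax (Matrix.diagonal w) with hσW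
  set σA := sigmaMax A with hσA
  set F := frobSq A with hFdef
  have hηpos : (0:ℝ) < (η:ℝ) := by exact_mod_cast Nat.lt_of_lt_of_le Nat.zero_lt_one hη.le
  have hηne : (η:ℝ) ≠ 0 := ne_of_gt hηpos
  have hFne : F ≠ 0 := ne_of_gt hF
  have hrow : ∀ i, 0 < rowNormSq A i := by
    intro i
    have : rowNormSq A i = norm2Sq (A i) := rfl
    rw [this]
    exact norm2Sq_pos (A i) (hA i)
  -- step decomposition
  have hstep : ∀ τ : Fin η → Fin m, rskaStep A b lam w η u τ
      = u + (-((η:ℝ)⁻¹ • ∑ t, c (τ t) • A (τ t))) := by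
    intro τ
    rw [rskaStep, sub_eq_add_neg]
  -- residual identity
  have hresid : ∀ i, dot (x - xhat) (A i) = r i := by
    intro i
    have hb : b i = ∑ j, A i j * xhat j := by
      rw [← hxhat]
      simp [Matrix.mulVec, dotProduct]
    simp only [hr, dot, Pi.sub_apply, hb]
    rw [← Finset.sum_sub_distrib]
    apply Finset.sum_congr rfl
    intro j _
    ring
  -- pointwise descent bound
  have hptw : ∀ τ : Fin η → Fin m, Dfun lam xhat (rskaStep A b lam w η u τ)
      ≤ Dfun lam xhat u + (-(η:ℝ)⁻¹ * ∑ t, (c (τ t) * r (τ t)))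
        + ((η:ℝ)⁻¹^2 / 2) * norm2Sq (∑ t, c (τ t) • A (τ t)) := by
    intro τ
    rw [hstep τ]
    have hdesc := Dfun_descent hlam xhat u (-((η:ℝ)⁻¹ • ∑ t, c (τ t) • A (τ t)))
    have hlin : dot (x - xhat) (-((η:ℝ)⁻¹ • ∑ t, c (τ t) • A (τ t)))
        = -(η:ℝ)⁻¹ * ∑ t, (c (τ t) * r (τ t)) := by
      rw [dot_neg_right, dot_smul_right, dot_sum_right]
      rw [Finset.sum_congr rfl (fun t _ => dot_smul_right (x - xhat) (c (τ t)) (A (τ t)))]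
      rw [Finset.sum_congr rfl (fun t _ => by rw [hresid (τ t)])]
      ring
    have hquad : norm2Sq (-((η:ℝ)⁻¹ • ∑ t, c (τ t) • A (τ t)))
        = (η:ℝ)⁻¹^2 * norm2Sq (∑ t, c (τ t) • A (τ t)) := by
      rw [norm2Sq_neg, norm2Sq_smul]
    calc Dfun lam xhat (u + (-((η:ℝ)⁻¹ • ∑ t, c (τ t) • A (τ t))))
        ≤ Dfun lam xhat u + dot (x - xhat) (-((η:ℝ)⁻¹ • ∑ t, c (τ t) • A (τ t)))
          + norm2Sq (-((η:ℝ)⁻¹ • ∑ t, c (τ t) • A (τ t))) / 2 := hdesc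
      _ = Dfun lam xhat u + (-(η:ℝ)⁻¹ * ∑ t, (c (τ t) * r (τ t)))
          + ((η:ℝ)⁻¹^2 / 2) * norm2Sq (∑ t, c (τ t) • A (τ t)) := by
          rw [hlin, hquad]; ring
  -- expectation of the bound
  have hPnn : ∀ τ : Fin η → Fin m, 0 ≤ ∏ t, p (τ t) :=
    fun τ => Finset.prod_nonneg fun t _ => hp0 (τ t)
  have hEineq : ∑ τ : Fin η → Fin m, (∏ t, p (τ t)) * Dfun lam xhat (rskaStep A b lam w η u τ)
      ≤ ∑ τ : Fin η → Fin m, (∏ t, p (τ t)) * (Dfun lam xhat u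
          + (-(η:ℝ)⁻¹ * ∑ t, (c (τ t) * r (τ t)))
          + ((η:ℝ)⁻¹^2 / 2) * norm2Sq (∑ t, c (τ t) • A (τ t))) :=
    Finset.sum_le_sum fun τ _ => mul_le_mul_of_nonneg_left (hptw τ) (hPnn τ)
  -- split the expectation
  have hsplit : ∑ τ : Fin η → Fin m, (∏ t, p (τ t)) * (Dfun lam xhat u
          + (-(η:ℝ)⁻¹ * ∑ t, (c (τ t) * r (τ t)))
          + ((η:ℝ)⁻¹^2 / 2) * norm2Sq (∑ t, c (τ t) • A (τ t)))
      = Dfun lam xhat u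
        + (-(η:ℝ)⁻¹) * ((η:ℝ) * ∑ i, p i * (c i * r i))
        + ((η:ℝ)⁻¹^2/2) * ((η:ℝ) * (∑ i, p i * norm2Sq (c i • A i))
            + ((η:ℝ)^2 - (η:ℝ)) * norm2Sq (∑ i, p i • (c i • A i))) := by
    have e1 := exp_total (η := η) p hp1
    have e2 := exp_dot_sum (η := η) p hp1 (fun i => c i * r i)
    have e3 := exp_norm2Sq_sum (η := η) p hp1 (fun i => c i • A i)
    calc ∑ τ : Fin η → Fin m, (∏ t, p (τ t)) * (Dfun lam xhat u
          + (-(η:ℝ)⁻¹ * ∑ t, (c (τ t) * r (τ t)))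
          + ((η:ℝ)⁻¹^2 / 2) * norm2Sq (∑ t, c (τ t) • A (τ t)))
        = (∑ τ : Fin η → Fin m, (∏ t, p (τ t))) * Dfun lam xhat u
          + (-(η:ℝ)⁻¹) * (∑ τ : Fin η → Fin m, (∏ t, p (τ t)) * (∑ t, (c (τ t) * r (τ t))))
          + ((η:ℝ)⁻¹^2/2) * (∑ τ : Fin η → Fin m, (∏ t, p (τ t)) * norm2Sq (∑ t, c (τ t) • A (τ t))) := by
          rw [Finset.sum_mul, Finset.mul_sum, Finset.mul_sum, ← Finset.sum_add_distrib,
            ← Finset.sum_add_distrib]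
          apply Finset.sum_congr rfl
          intro τ _
          ring
      _ = _ := by rw [e1, e2, e3, one_mul]
  -- value identities and bounds
  have hcr : ∀ i, p i * (c i * r i) = (α / F) * (r i)^2 := by
    intro i
    have h1 : p i * (c i * r i) = (p i * w i / rowNormSq A i) * (r i)^2 := by
      simp only [hc, hr]
      ring
    rw [h1, hcoup i]
  have hdiag : ∀ i, p i * norm2Sq (c i • A i) = (α / F) * (w i * (r i)^2) := by
    intro i
    rw [norm2Sq_smul]
    have hAr : norm2Sq (A i) = rowNormSq A i := rfl
    rw [hAr]
    have h0 : rowNormSq A i ≠ 0 := ne_of_gt (hrow i)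
    have h1 : p i * ((c i)^2 * rowNormSq A i) = (p i * w i / rowNormSq A i) * (w i * (r i)^2) := by
      simp only [hc, hr]
      field_simp
    rw [h1, hcoup i]
  have hvec : (∑ i, p i • (c i • A i)) = (α / F) • (A.transpose.mulVec r) := by
    funext j
    rw [Finset.sum_apply]
    simp only [Pi.smul_apply, smul_eq_mul]
    have h1 : ∀ i, p i * (c i * A i j) = (α / F) * (r i * A i j) := by
      intro i
      have h2 : p i * (c i * A i j) = (p i * w i / rowNormSq A i) * (r i * A i j) := by
        simp only [hc, hr]
        ring
      rw [h2, hcoup i]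
    rw [Finset.sum_congr rfl fun i _ => h1 i]
    rw [← Finset.mul_sum]
    congr 1
    simp [Matrix.mulVec, dotProduct, Matrix.transpose_apply]
    apply Finset.sum_congr rfl
    intro i _
    ring
  -- final assembly
  set R := norm2Sq r with hR
  have hsum_cr : ∑ i, p i * (c i * r i) = (α / F) * R := by
    rw [Finset.sum_congr rfl fun i _ => hcr i, ← Finset.mul_sum]
    congr 1
  have hwle : ∀ i, w i ≤ σW := fun i => sigmaMax_diag_ge w i
  have hsum_diag : ∑ i, p i * norm2Sq (c i • A i) ≤ (α / F) * (σW * R) := by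
    rw [Finset.sum_congr rfl fun i _ => hdiag i, ← Finset.mul_sum]
    apply mul_le_mul_of_nonneg_left _ (by positivity)
    calc ∑ i, w i * (r i)^2 ≤ ∑ i, σW * (r i)^2 :=
          Finset.sum_le_sum fun i _ => mul_le_mul_of_nonneg_right (hwle i) (sq_nonneg _)
      _ = σW * R := by rw [← Finset.mul_sum]; rfl
  have hsum_cross : norm2Sq (∑ i, p i • (c i • A i)) ≤ (α/F)^2 * (σA^2 * R) := by
    rw [hvec, norm2Sq_smul]
    apply mul_le_mul_of_nonneg_left _ (sq_nonneg _)
    have := transpose_bound A r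
    exact this
  -- put it together
  apply le_trans hEineq
  rw [hsplit, hsum_cr]
  have hcoef : Dfun lam xhat u + (-(η:ℝ)⁻¹) * ((η:ℝ) * ((α/F) * R))
      + ((η:ℝ)⁻¹^2/2) * ((η:ℝ) * ((α / F) * (σW * R))
          + ((η:ℝ)^2 - (η:ℝ)) * ((α/F)^2 * (σA^2 * R)))
      = Dfun lam xhat u - ((α - α / (2*(η:ℝ)) * (α/F*((η:ℝ)-1)*σA^2 + σW)) / F) * R := by
    field_simp
    ring
  rw [← hcoef]
  have hc1 : (0:ℝ) ≤ (η:ℝ)⁻¹^2/2 := by positivity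
  have hc2 : (0:ℝ) ≤ (η:ℝ) := le_of_lt hηpos
  have hc3 : (0:ℝ) ≤ (η:ℝ)^2 - (η:ℝ) := by
    have h1 : (1:ℝ) < (η:ℝ) := by exact_mod_cast hη
    nlinarith [h1]
  have hq : ((η:ℝ)⁻¹^2/2) * ((η:ℝ) * (∑ i, p i * norm2Sq (c i • A i))
        + ((η:ℝ)^2 - (η:ℝ)) * norm2Sq (∑ i, p i • (c i • A i)))
      ≤ ((η:ℝ)⁻¹^2/2) * ((η:ℝ) * ((α / F) * (σW * R))
        + ((η:ℝ)^2 - (η:ℝ)) * ((α/F)^2 * (σA^2 * R))) := by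
    apply mul_le_mul_of_nonneg_left _ hc1
    apply add_le_add
    · exact mul_le_mul_of_nonneg_left hsum_diag hc2
    · exact mul_le_mul_of_nonneg_left hsum_cross hc3
  linarith [hq]

end RSKA

open RSKA in
set_option maxHeartbeats 2000000 in
/-- (Linear expected convergence of RSKA, squared-norm version.)
Under the hypotheses of the linear-convergence theorem for RSKA, the iterates satisfy
`E[‖x_k − x̂‖₂²] ≤ 2 q^k f(x̂)` with `q = 1 − L(α)/(γ‖A‖_F²)`. -/
theorem rska_linear_convergence_norm {m n η : ℕ} (hη : 1 < η)
    (A : Matrix (Fin m) (Fin n) ℝ) (hA : ∀ i, A i ≠ 0)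
    (b : Fin m → ℝ) (lam : ℝ) (hlam : 0 < lam)
    (w p : Fin m → ℝ) (hp0 : ∀ i, 0 ≤ p i) (hp1 : ∑ i, p i = 1)
    (α : ℝ) (hα : 0 < α)
    (hcoup : ∀ i, p i * w i / rowNormSq A i = α / frobSq A)
    (hαub : α < 2 * (((η : ℝ) - sigmaMax (Matrix.diagonal w) / 2) * frobSq A)
        / (sigmaMax A ^ 2 * ((η : ℝ) - 1)))
    (xhat : Fin n → ℝ) (hxhat : A.mulVec xhat = b)
    (hmin : ∀ x, A.mulVec x = b → fObj lam xhat ≤ fObj lam x) :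
    let γ : ℝ := (minAbs xhat + 2 * lam) / (minAbs xhat * sigmaTildeMin A ^ 2)
    let L : ℝ := α - α / (2 * (η : ℝ)) *
      (α / frobSq A * ((η : ℝ) - 1) * sigmaMax A ^ 2 + sigmaMax (Matrix.diagonal w))
    let q : ℝ := 1 - L / (γ * frobSq A)
    ∀ k : ℕ,
      ∑ σ : Fin k → Fin η → Fin m, histProb p k σ *
          norm2Sq (softShrink lam (rskaSeq A b lam w η k σ) - xhat)
        ≤ 2 * q ^ k * fObj lam xhat := by
  intro γ L q k
  -- basic facts
  rcases Nat.eq_zero_or_pos m with hm | hm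
  · subst hm
    simp at hp1
  have i0 : Fin m := ⟨0, hm⟩
  have hηR : (1:ℝ) < (η:ℝ) := by exact_mod_cast hη
  have hηpos : (0:ℝ) < (η:ℝ) := by linarith
  have hF : 0 < frobSq A := by
    have h1 : ∀ i, 0 < rowNormSq A i := fun i => norm2Sq_pos (A i) (hA i)
    have h2 : frobSq A = ∑ i, rowNormSq A i := rfl
    rw [h2]
    exact Finset.sum_pos (fun i _ => h1 i) ⟨i0, Finset.mem_univ i0⟩
  set σW := sigmaMax (Matrix.diagonal w) with hσWd
  set σA := sigmaMax A with hσAd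
  set F := frobSq A with hFd
  have hFne : F ≠ 0 := ne_of_gt hF
  have hγdef : γ = (minAbs xhat + 2*lam) / (minAbs xhat * sigmaTildeMin A ^ 2) := rfl
  have hLdef : L = α - α / (2*(η:ℝ)) * (α/F*((η:ℝ)-1)*σA^2 + σW) := rfl
  have hqdef : q = 1 - L / (γ * F) := rfl
  clear_value γ L q
  -- L ≥ 0
  have hLpos : 0 < L := by
    by_cases hz : σA^2 * ((η:ℝ)-1) = 0
    · rw [hσAd] at hz  -- align
      rw [hz, div_zero] at hαub
      linarith
    · have hd : 0 < σA^2 * ((η:ℝ)-1) := by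
        rcases lt_or_gt_of_ne hz with h | h
        · exfalso
          have : 0 ≤ σA^2 * ((η:ℝ)-1) := mul_nonneg (sq_nonneg _) (by linarith)
          linarith
        · exact h
      have key : α * (σA^2 * ((η:ℝ)-1)) < 2*(((η:ℝ) - σW/2) * F) := (lt_div_iff₀ hd).mp hαub
      have hX : α/F*((η:ℝ)-1)*σA^2 + σW < 2*(η:ℝ) := by
        have h1 : α*((η:ℝ)-1)*σA^2 < 2*(η:ℝ)*F - σW*F := by nlinarith [key]
        have h2 : α/F*((η:ℝ)-1)*σA^2 = (α*((η:ℝ)-1)*σA^2)/F := by ring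
        rw [h2]
        rw [div_add' _ _ _ hFne, div_lt_iff₀ hF]
        nlinarith [h1]
      rw [hLdef]
      have h3 : α / (2*(η:ℝ)) * (α/F*((η:ℝ)-1)*σA^2 + σW) < α / (2*(η:ℝ)) * (2*(η:ℝ)) := by
        apply mul_lt_mul_of_pos_left hX (by positivity)
      have h4 : α / (2*(η:ℝ)) * (2*(η:ℝ)) = α := by field_simp
      linarith
  have hLnn : 0 ≤ L := le_of_lt hLpos
  -- case x̂ = 0 : everything is zero
  by_cases hxz : xhat = 0
  · subst hxz
    have hb0 : b = 0 := by rw [← hxhat]; simp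
    have hS0 : softShrink lam (0 : Fin n → ℝ) = 0 := by
      funext j; simp [softShrink]
    have hstep0 : ∀ τ : Fin η → Fin m, rskaStep A b lam w η (0 : Fin n → ℝ) τ = 0 := by
      intro τ
      rw [rskaStep, hS0]
      have hz : ∀ t : Fin η, ((w (τ t) * (dot (A (τ t)) (0 : Fin n → ℝ) - b (τ t))) / rowNormSq A (τ t))
          • A (τ t) = 0 := by
        intro t
        have h1 : dot (A (τ t)) (0 : Fin n → ℝ) = 0 := by simp [dot]
        have h2 : b (τ t) = 0 := by rw [hb0]; rfl
        rw [h1, h2]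
        norm_num
      rw [Finset.sum_congr rfl fun t _ => hz t]
      simp
    have hseq0 : ∀ k (σ : Fin k → Fin η → Fin m), rskaSeq A b lam w η k σ = 0 := by
      intro k
      induction k with
      | zero => intro σ; rfl
      | succ k ih =>
          intro σ
          show rskaStep A b lam w η (rskaSeq A b lam w η k (fun i => σ i.castSucc)) (σ (Fin.last k)) = 0
          rw [ih (fun i => σ i.castSucc)]
          exact hstep0 _
    have hlhs : ∀ σ : Fin k → Fin η → Fin m,
        histProb p k σ * norm2Sq (softShrink lam (rskaSeq A b lam w η k σ) - 0) = 0 := by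
      intro σ
      rw [hseq0 k σ, hS0]
      have : norm2Sq ((0 : Fin n → ℝ) - 0) = 0 := by simp [norm2Sq]
      rw [this, mul_zero]
    rw [Finset.sum_congr rfl fun σ _ => hlhs σ]
    have hf0 : fObj lam (0 : Fin n → ℝ) = 0 := by simp [fObj, l1Norm, norm2Sq]
    rw [hf0]
    simp
  -- case x̂ ≠ 0
  obtain ⟨hmabs, hmle⟩ := minAbs_spec xhat hxz
  set mh := minAbs xhat with hmhd
  set σT := sigmaTildeMin A with hσTd
  have hσTnn : 0 ≤ σT := sigmaTilde_nonneg A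
  have hfpos : 0 < fObj lam xhat := by
    have h1 : 0 ≤ l1Norm xhat := Finset.sum_nonneg fun j _ => abs_nonneg _
    have h2 : 0 < norm2Sq xhat := norm2Sq_pos xhat hxz
    have : fObj lam xhat = lam * l1Norm xhat + norm2Sq xhat / 2 := rfl
    rw [this]
    nlinarith
  -- the per-step contraction:  E_τ D(step u) ≤ q · D(u)
  have hstepq : ∀ u : Fin n → ℝ,
      ∑ τ : Fin η → Fin m, (∏ t, p (τ t)) * Dfun lam xhat (rskaStep A b lam w η u τ)
        ≤ q * Dfun lam xhat u := by
    intro u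
    have hse := step_exp hη A hA b hlam w p hp0 hp1 α hα hcoup hF xhat hxhat u
    rw [← hFd, ← hσAd, ← hσWd, ← hLdef] at hse
    by_cases hσT0 : σT = 0
    · -- degenerate: γ = 0, q = 1
      have hq1 : q = (1:ℝ) := by
        have hγ : γ = 0 := by
          rw [hγdef, hσT0]
          norm_num
        rw [hqdef, hγ, zero_mul, div_zero, sub_zero]
      rw [hq1, one_mul]
      have hrnn : 0 ≤ norm2Sq (fun i => dot (A i) (softShrink lam u) - b i) := norm2Sq_nonneg _
      have : 0 ≤ (L / F) * norm2Sq (fun i => dot (A i) (softShrink lam u) - b i) :=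
        mul_nonneg (div_nonneg hLnn (le_of_lt hF)) hrnn
      calc ∑ τ : Fin η → Fin m, (∏ t, p (τ t)) * Dfun lam xhat (rskaStep A b lam w η u τ)
          ≤ Dfun lam xhat u - (L / F) * norm2Sq (fun i => dot (A i) (softShrink lam u) - b i) := hse
        _ ≤ Dfun lam xhat u := by linarith
    · -- good case: error bound
      have hσTpos : 0 < σT := lt_of_le_of_ne hσTnn (Ne.symm hσT0)
      have hγpos : 0 < γ := by
        rw [hγdef]
        positivity
      -- residual equals A(x - x̂)
      set x := softShrink lam u with hxd
      set z : Fin n → ℝ := x - xhat with hzd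
      have hres : norm2Sq (fun i => dot (A i) x - b i) = norm2Sq (A.mulVec z) := by
        unfold norm2Sq
        apply Finset.sum_congr rfl
        intro i _
        congr 1
        have h1 : (A.mulVec z) i = dot (A i) x - (A.mulVec xhat) i := by
          simp only [hzd, Matrix.mulVec, dotProduct, dot, Pi.sub_apply]
          rw [← Finset.sum_sub_distrib]
          apply Finset.sum_congr rfl
          intro j _
          ring
        rw [h1, hxhat]
      -- error bound D(u) ≤ γ ‖r‖²
      have herr : Dfun lam xhat u ≤ γ * norm2Sq (fun i => dot (A i) x - b i) := by
        rw [hres]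
        by_cases hz0 : z = 0
        · have h1 : Dfun lam xhat u ≤ (1/2 + 2*lam/mh) * norm2Sq z :=
            Dfun_upper hlam xhat u mh hmabs hmle
          have h2 : norm2Sq z = 0 := by rw [hz0]; simp [norm2Sq]
          have h3 : 0 ≤ γ * norm2Sq (A.mulVec z) :=
            mul_nonneg (le_of_lt hγpos) (norm2Sq_nonneg _)
          rw [h2, mul_zero] at h1
          linarith
        · have hAex : ∃ i j, A i j ≠ 0 := by
            obtain ⟨j, hj⟩ : ∃ j, A i0 j ≠ 0 := by
              by_contra hco
              push_neg at hco
              exact hA i0 (funext hco)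
            exact ⟨i0, j, hj⟩
          have h1 : Dfun lam xhat u ≤ (1/2 + 2*lam/mh) * norm2Sq z :=
            Dfun_upper hlam xhat u mh hmabs hmle
          have h2 : σT^2 * norm2Sq z ≤ norm2Sq (A.mulVec z) := sigmaTilde_bound A hAex z hz0
          have h3 : (1/2 + 2*lam/mh) * norm2Sq z ≤ γ * (σT^2 * norm2Sq z) := by
            have hγσ : γ * σT^2 = (mh + 2*lam)/mh := by
              rw [hγdef]
              field_simp
            have h4 : (1/2 + 2*lam/mh) ≤ γ * σT^2 := by
              rw [hγσ]
              rw [div_add_div _ _ (by norm_num : (2:ℝ) ≠ 0) (ne_of_gt hmabs)]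
              rw [div_le_div_iff₀ (by positivity) hmabs]
              nlinarith [hmabs, hlam]
            calc (1/2 + 2*lam/mh) * norm2Sq z ≤ (γ * σT^2) * norm2Sq z :=
                  mul_le_mul_of_nonneg_right h4 (norm2Sq_nonneg _)
              _ = γ * (σT^2 * norm2Sq z) := by ring
          have h5 : γ * (σT^2 * norm2Sq z) ≤ γ * norm2Sq (A.mulVec z) :=
            mul_le_mul_of_nonneg_left h2 (le_of_lt hγpos)
          linarith
      -- combine
      have hLF : 0 ≤ L / F := div_nonneg hLnn (le_of_lt hF)
      have h6 : (L/F) * (Dfun lam xhat u / γ) ≤ (L/F) * norm2Sq (fun i => dot (A i) x - b i) := by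
        apply mul_le_mul_of_nonneg_left _ hLF
        rw [div_le_iff₀ hγpos]
        calc Dfun lam xhat u ≤ γ * norm2Sq (fun i => dot (A i) x - b i) := herr
          _ = norm2Sq (fun i => dot (A i) x - b i) * γ := by ring
      have h7 : Dfun lam xhat u - (L/F) * (Dfun lam xhat u / γ) = q * Dfun lam xhat u := by
        rw [hqdef]
        field_simp
      calc ∑ τ : Fin η → Fin m, (∏ t, p (τ t)) * Dfun lam xhat (rskaStep A b lam w η u τ)
          ≤ Dfun lam xhat u - (L / F) * norm2Sq (fun i => dot (A i) x - b i) := hse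
        _ ≤ Dfun lam xhat u - (L/F) * (Dfun lam xhat u / γ) := by linarith
        _ = q * Dfun lam xhat u := h7
  -- q ≥ 0
  have hq0 : 0 ≤ q := by
    have h1 := hstepq 0
    rw [Dfun_zero hlam xhat] at h1
    have h2 : 0 ≤ ∑ τ : Fin η → Fin m, (∏ t, p (τ t)) * Dfun lam xhat (rskaStep A b lam w η 0 τ) :=
      Finset.sum_nonneg fun τ _ => mul_nonneg (Finset.prod_nonneg fun t _ => hp0 (τ t))
        (Dfun_nonneg hlam xhat _)
    nlinarith [hfpos]
  -- expected Bregman distance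
  set E : ℕ → ℝ := fun k => ∑ σ : Fin k → Fin η → Fin m,
    histProb p k σ * Dfun lam xhat (rskaSeq A b lam w η k σ) with hEd
  have hEapp : ∀ i : ℕ, E i = ∑ σ : Fin i → Fin η → Fin m,
      histProb p i σ * Dfun lam xhat (rskaSeq A b lam w η i σ) := fun i => rfl
  have hE0 : E 0 = fObj lam xhat := by
    rw [hEapp]
    have h1 : ∀ σ : Fin 0 → Fin η → Fin m,
        histProb p 0 σ * Dfun lam xhat (rskaSeq A b lam w η 0 σ) = fObj lam xhat := by
      intro σ
      have hh : histProb p 0 σ = 1 := by simp [histProb]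
      have hr : rskaSeq A b lam w η 0 σ = 0 := rfl
      rw [hh, hr, one_mul, Dfun_zero hlam xhat]
    rw [Finset.sum_congr rfl fun σ _ => h1 σ]
    simp
  have hErec : ∀ j : ℕ, E (j+1) ≤ q * E j := by
    intro j
    let e := Fin.snocEquiv (fun _ : Fin (j+1) => (Fin η → Fin m))
    have hsum := Equiv.sum_comp e (fun σ : Fin (j+1) → Fin η → Fin m =>
      histProb p (j+1) σ * Dfun lam xhat (rskaSeq A b lam w η (j+1) σ))
    rw [hEapp, ← hsum, Fintype.sum_prod_type]
    have hterm : ∀ (τ : Fin η → Fin m) (σ' : Fin j → Fin η → Fin m),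
        histProb p (j+1) (e (τ, σ')) * Dfun lam xhat (rskaSeq A b lam w η (j+1) (e (τ, σ')))
          = (histProb p j σ' * (∏ t, p (τ t)))
            * Dfun lam xhat (rskaStep A b lam w η (rskaSeq A b lam w η j σ') τ) := by
      intro τ σ'
      have hesnoc : e (τ, σ') = Fin.snoc σ' τ := rfl
      have he : ∀ i : Fin j, e (τ, σ') i.castSucc = σ' i := by
        intro i
        rw [hesnoc, Fin.snoc_castSucc]
      have hel : e (τ, σ') (Fin.last j) = τ := by
        rw [hesnoc, Fin.snoc_last]
      have hhist : histProb p (j+1) (e (τ, σ')) = histProb p j σ' * (∏ t, p (τ t)) := by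
        rw [histProb, Fin.prod_univ_castSucc]
        have h1 : ∀ i : Fin j, (∏ t, p (e (τ, σ') i.castSucc t)) = ∏ t, p (σ' i t) := by
          intro i
          rw [he i]
        rw [Finset.prod_congr rfl fun i _ => h1 i, hel]
        rfl
      have hseq : rskaSeq A b lam w η (j+1) (e (τ, σ'))
          = rskaStep A b lam w η (rskaSeq A b lam w η j σ') τ := by
        show rskaStep A b lam w η (rskaSeq A b lam w η j (fun i => e (τ, σ') i.castSucc))
          (e (τ, σ') (Fin.last j)) = _
        rw [show (fun i => e (τ, σ') i.castSucc) = σ' from funext he, hel]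
      rw [hhist, hseq]
    calc ∑ τ : Fin η → Fin m, ∑ σ' : Fin j → Fin η → Fin m,
          histProb p (j+1) (e (τ, σ')) * Dfun lam xhat (rskaSeq A b lam w η (j+1) (e (τ, σ')))
        = ∑ σ' : Fin j → Fin η → Fin m, ∑ τ : Fin η → Fin m,
            histProb p j σ' * ((∏ t, p (τ t))
              * Dfun lam xhat (rskaStep A b lam w η (rskaSeq A b lam w η j σ') τ)) := by
          rw [Finset.sum_comm]
          apply Finset.sum_congr rfl
          intro σ' _
          apply Finset.sum_congr rfl
          intro τ _
          rw [hterm τ σ']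
          ring
      _ = ∑ σ' : Fin j → Fin η → Fin m, histProb p j σ'
            * (∑ τ : Fin η → Fin m, (∏ t, p (τ t))
              * Dfun lam xhat (rskaStep A b lam w η (rskaSeq A b lam w η j σ') τ)) := by
          apply Finset.sum_congr rfl
          intro σ' _
          rw [Finset.mul_sum]
      _ ≤ ∑ σ' : Fin j → Fin η → Fin m, histProb p j σ'
            * (q * Dfun lam xhat (rskaSeq A b lam w η j σ')) := by
          apply Finset.sum_le_sum
          intro σ' _
          apply mul_le_mul_of_nonneg_left (hstepq _)
          exact Finset.prod_nonneg fun i _ => Finset.prod_nonneg fun t _ => hp0 _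
      _ = q * E j := by
          rw [hEapp, Finset.mul_sum]
          apply Finset.sum_congr rfl
          intro σ' _
          ring
  have hEk : ∀ j : ℕ, E j ≤ q^j * fObj lam xhat := by
    intro j
    induction j with
    | zero => rw [hE0, pow_zero, one_mul]
    | succ j ih =>
        calc E (j+1) ≤ q * E j := hErec j
          _ ≤ q * (q^j * fObj lam xhat) := mul_le_mul_of_nonneg_left ih hq0
          _ = q^(j+1) * fObj lam xhat := by ring
  -- conclude
  calc ∑ σ : Fin k → Fin η → Fin m, histProb p k σ *
        norm2Sq (softShrink lam (rskaSeq A b lam w η k σ) - xhat)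
      ≤ ∑ σ : Fin k → Fin η → Fin m, histProb p k σ *
          (2 * Dfun lam xhat (rskaSeq A b lam w η k σ)) := by
        apply Finset.sum_le_sum
        intro σ _
        apply mul_le_mul_of_nonneg_left _ (Finset.prod_nonneg fun i _ =>
          Finset.prod_nonneg fun t _ => hp0 _)
        have := Dfun_strong hlam xhat (rskaSeq A b lam w η k σ)
        linarith
    _ = 2 * E k := by
        rw [hEapp, Finset.mul_sum]
        apply Finset.sum_congr rfl
        intro σ _
        ring
    _ ≤ 2 * (q^k * fObj lam xhat) := by
        have := hEk k
        linarith
    _ = 2 * q^k * fObj lam xhat := by ring
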